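/- Let K be an n×n real symmetric PSD matrix with top eigenvalue λ₁, top unit eigenvector v₁, and suppose a sequence of unit vectors z_t satisfies z_{t+1} = z̃_{t+1}/‖z̃_{t+1}‖ where z̃_{t+1} = K z_t + ‖K z_t‖ δ u_t for unit vectors u_t with ⟨v₁, u_t⟩ ≥ 0. If z_tᵀ K z_t ≤ (1 − ε/2)λ₁ for all t ≤ T, then for all such t, ⟨v₁, z_{t+1}⟩ ≥ ⟨v₁, z_t⟩ / ((1+δ)√(1−ε/2)). -/

import Mathlib

open Matrix

/-- Euclidean norm of a vector in `ℝⁿ`. -/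
noncomputable def eucNorm {n : ℕ} (x : Fin n → ℝ) : ℝ := Real.sqrt (∑ i, x i ^ 2)

lemma eucNorm_eq_norm {n : ℕ} (x : Fin n → ℝ) :
    eucNorm x = ‖(WithLp.equiv 2 (Fin n → ℝ)).symm x‖ := by
  rw [EuclideanSpace.norm_eq]
  exact congrArg Real.sqrt (Finset.sum_congr rfl fun i _ => by simp [sq_abs])

lemma eucNorm_nonneg' {n : ℕ} (x : Fin n → ℝ) : 0 ≤ eucNorm x := Real.sqrt_nonneg _

lemma eucNorm_zero' {n : ℕ} : eucNorm (0 : Fin n → ℝ) = 0 := by simp [eucNorm]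

lemma eucNorm_add_le' {n : ℕ} (x y : Fin n → ℝ) : eucNorm (x + y) ≤ eucNorm x + eucNorm y := by
  rw [eucNorm_eq_norm, eucNorm_eq_norm, eucNorm_eq_norm]
  exact norm_add_le _ _

lemma eucNorm_smul' {n : ℕ} (c : ℝ) (x : Fin n → ℝ) : eucNorm (c • x) = |c| * eucNorm x := by
  rw [eucNorm_eq_norm, eucNorm_eq_norm, ← Real.norm_eq_abs]
  exact norm_smul c _

lemma eucNorm_eq_zero' {n : ℕ} {x : Fin n → ℝ} (h : eucNorm x = 0) : x = 0 := by
  rw [eucNorm_eq_norm, norm_eq_zero] at h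
  exact (WithLp.equiv 2 (Fin n → ℝ)).symm.injective h

lemma dotProduct_self_eq_enorm_sq {n : ℕ} (x : Fin n → ℝ) : x ⬝ᵥ x = eucNorm x ^ 2 := by
  rw [eucNorm, Real.sq_sqrt (Finset.sum_nonneg fun i _ => sq_nonneg (x i))]
  exact Finset.sum_congr rfl fun i _ => (sq (x i)).symm

theorem stmt4 {n : ℕ} (K : Matrix (Fin n) (Fin n) ℝ) (hK : K.PosSemidef)
    (lam1 : ℝ) (v1 : Fin n → ℝ)
    (heig : K.mulVec v1 = lam1 • v1) (hv1 : eucNorm v1 = 1)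
    (htop : ∀ i, hK.1.eigenvalues i ≤ lam1)
    (δ ε : ℝ) (hδ : 0 < δ) (hδ1 : δ < 1) (hε : 0 < ε) (hε1 : ε < 1)
    (z u : ℕ → Fin n → ℝ)
    (hz0 : 1 / Real.sqrt n ≤ v1 ⬝ᵥ z 0)
    (hznorm : ∀ t, eucNorm (z t) = 1)
    (hunorm : ∀ t, eucNorm (u t) = 1) (hupos : ∀ t, 0 ≤ v1 ⬝ᵥ u t)
    (hrec : ∀ t, z (t + 1) =
      (eucNorm (K.mulVec (z t) + (eucNorm (K.mulVec (z t)) * δ) • u t))⁻¹ •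
        (K.mulVec (z t) + (eucNorm (K.mulVec (z t)) * δ) • u t))
    (T : ℕ)
    (hsmall : ∀ t ≤ T, z t ⬝ᵥ K.mulVec (z t) ≤ (1 - ε / 2) * lam1) :
    ∀ t ≤ T, (v1 ⬝ᵥ z t) / ((1 + δ) * Real.sqrt (1 - ε / 2)) ≤ v1 ⬝ᵥ z (t + 1) := by
  have hstar : ∀ x : Fin n → ℝ, star x = x := fun x => funext fun i => star_trivial _
  have hsymT : Kᵀ = K := by
    ext i j
    have := congrFun (congrFun hK.1 i) j
    simpa using this
  have hswap : ∀ x y : Fin n → ℝ, x ⬝ᵥ K.mulVec y = K.mulVec x ⬝ᵥ y := by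
    intro x y
    rw [Matrix.dotProduct_mulVec, ← Matrix.mulVec_transpose, hsymT]
  -- PSD of lam1 • K - K * K
  have hsub : (lam1 • K - K * K).PosSemidef := by
    have hU : (star (hK.1.eigenvectorUnitary : Matrix (Fin n) (Fin n) ℝ)) *
        (hK.1.eigenvectorUnitary : Matrix (Fin n) (Fin n) ℝ) = 1 :=
      Unitary.coe_star_mul_self _
    set U := (hK.1.eigenvectorUnitary : Matrix (Fin n) (Fin n) ℝ) with hUdef
    set d := hK.1.eigenvalues with hd
    have hspec : K = U * diagonal d * star U := by
      have := hK.1.spectral_theorem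
      rwa [RCLike.ofReal_real_eq_id, Function.id_comp] at this
    have hdiag : lam1 • diagonal d - diagonal (fun i => d i * d i)
        = diagonal (fun i => lam1 * d i - d i * d i) := by
      ext i j
      by_cases h : i = j <;> simp [Matrix.diagonal_apply, h]
    have key : lam1 • K - K * K = U * diagonal (fun i => lam1 * d i - d i * d i) * star U := by
      rw [hspec]
      have h2 : (U * diagonal d * star U) * (U * diagonal d * star U)
          = U * (diagonal d * diagonal d) * star U := by
        rw [Matrix.mul_assoc U (diagonal d) (star U), Matrix.mul_assoc, Matrix.mul_assoc,
          ← Matrix.mul_assoc (star U), hU, Matrix.one_mul]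
        simp only [Matrix.mul_assoc]
      rw [h2, diagonal_mul_diagonal, ← hdiag, Matrix.mul_sub, Matrix.sub_mul,
        Matrix.mul_smul, Matrix.smul_mul]
    rw [key]
    exact PosSemidef.mul_mul_conjTranspose_same
      (posSemidef_diagonal_iff.mpr fun i => by nlinarith [hK.eigenvalues_nonneg i, htop i]) U
  have hquad : ∀ x : Fin n → ℝ, K.mulVec x ⬝ᵥ K.mulVec x ≤ lam1 * (x ⬝ᵥ K.mulVec x) := by
    intro x
    have h := hsub.dotProduct_mulVec_nonneg x
    rw [hstar, Matrix.sub_mulVec, Matrix.smul_mulVec, dotProduct_sub, dotProduct_smul,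
      smul_eq_mul, ← Matrix.mulVec_mulVec] at h
    have h2 : K.mulVec x ⬝ᵥ K.mulVec x = x ⬝ᵥ K.mulVec (K.mulVec x) := (hswap x _).symm
    linarith
  have hKz_dot : ∀ x : Fin n → ℝ, v1 ⬝ᵥ K.mulVec x = lam1 * (v1 ⬝ᵥ x) := by
    intro x
    rw [hswap, heig, smul_dotProduct, smul_eq_mul]
  have hv1v1 : v1 ⬝ᵥ v1 = 1 := by
    rw [dotProduct_self_eq_enorm_sq, hv1, one_pow]
  have hzKz_nonneg : ∀ x : Fin n → ℝ, 0 ≤ x ⬝ᵥ K.mulVec x := by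
    intro x
    have := hK.dotProduct_mulVec_nonneg x
    rwa [hstar] at this
  have hlam_nonneg : 0 ≤ lam1 := by
    have := hzKz_nonneg v1
    rwa [heig, dotProduct_smul, smul_eq_mul, hv1v1, mul_one] at this
  have hlam_pos : 0 < lam1 := by
    rcases hlam_nonneg.lt_or_eq with h | h
    · exact h
    · exfalso
      have h0 := hsmall 0 (Nat.zero_le T)
      have hzK0 : z 0 ⬝ᵥ K.mulVec (z 0) = 0 :=
        le_antisymm (by nlinarith) (hzKz_nonneg _)
      have hw0 : K.mulVec (z 0) = 0 := by
        apply eucNorm_eq_zero'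
        have h1 : K.mulVec (z 0) ⬝ᵥ K.mulVec (z 0) ≤ 0 := by
          have := hquad (z 0); rw [hzK0] at this; linarith
        have h2 := dotProduct_self_eq_enorm_sq (K.mulVec (z 0))
        nlinarith [eucNorm_nonneg' (K.mulVec (z 0))]
      have h1 := hznorm 1
      rw [hrec 0, hw0] at h1
      simp [eucNorm_zero'] at h1
  have hs : 0 < Real.sqrt (1 - ε / 2) := Real.sqrt_pos.mpr (by linarith)
  have hC : 0 < (1 + δ) * Real.sqrt (1 - ε / 2) := mul_pos (by linarith) hs
  -- key per-step estimate
  have key : ∀ t ≤ T, 0 ≤ v1 ⬝ᵥ z t →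
      (v1 ⬝ᵥ z t) / ((1 + δ) * Real.sqrt (1 - ε / 2)) ≤ v1 ⬝ᵥ z (t + 1) := by
    intro t ht ha
    set w := K.mulVec (z t) with hwdef
    set m := eucNorm w with hmdef
    set zt := w + (m * δ) • u t with hztdef
    have hm0 : 0 ≤ m := eucNorm_nonneg' w
    -- m is small
    have hm2 : m ^ 2 ≤ (lam1 * Real.sqrt (1 - ε / 2)) ^ 2 := by
      have h1 : w ⬝ᵥ w ≤ lam1 * (z t ⬝ᵥ w) := hquad (z t)
      have h2 : z t ⬝ᵥ w ≤ (1 - ε / 2) * lam1 := hsmall t ht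
      have h3 := dotProduct_self_eq_enorm_sq w
      have h4 : Real.sqrt (1 - ε / 2) ^ 2 = 1 - ε / 2 := Real.sq_sqrt (by linarith)
      have h5 : m ^ 2 ≤ lam1 * ((1 - ε / 2) * lam1) := by
        rw [hmdef, ← h3]
        exact h1.trans (mul_le_mul_of_nonneg_left h2 hlam_nonneg)
      calc m ^ 2 ≤ lam1 * ((1 - ε / 2) * lam1) := h5
        _ = (lam1 * Real.sqrt (1 - ε / 2)) ^ 2 := by rw [mul_pow, h4]; ring
    have hm : m ≤ lam1 * Real.sqrt (1 - ε / 2) := by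
      have := Real.sqrt_le_sqrt hm2
      rwa [Real.sqrt_sq hm0, Real.sqrt_sq (by positivity)] at this
    -- norm of the unnormalized vector
    have hN_le : eucNorm zt ≤ (1 + δ) * m := by
      have h1 := eucNorm_add_le' w ((m * δ) • u t)
      have h2 : eucNorm ((m * δ) • u t) = m * δ := by
        rw [eucNorm_smul', hunorm t, mul_one, abs_of_nonneg (by positivity)]
      rw [h2] at h1
      calc eucNorm zt ≤ m + m * δ := h1
        _ = (1 + δ) * m := by ring
    have hz1 : z (t + 1) = (eucNorm zt)⁻¹ • zt := hrec t
    have hNpos : 0 < eucNorm zt := by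
      rcases (eucNorm_nonneg' zt).lt_or_eq with h | h
      · exact h
      · exfalso
        have h1 := hznorm (t + 1)
        rw [hz1, eucNorm_smul', ← h, mul_zero] at h1
        exact one_ne_zero h1.symm
    -- numerator lower bound
    have hnum : lam1 * (v1 ⬝ᵥ z t) ≤ v1 ⬝ᵥ zt := by
      rw [hztdef, dotProduct_add, dotProduct_smul, smul_eq_mul, hwdef, hKz_dot]
      nlinarith [hupos t, mul_nonneg (mul_nonneg hm0 hδ.le) (hupos t)]
    have hnum0 : 0 ≤ v1 ⬝ᵥ zt := le_trans (mul_nonneg hlam_nonneg ha) hnum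
    have hdot : v1 ⬝ᵥ z (t + 1) = (eucNorm zt)⁻¹ * (v1 ⬝ᵥ zt) := by
      rw [hz1, dotProduct_smul, smul_eq_mul]
    rw [hdot]
    have hB : eucNorm zt ≤ ((1 + δ) * Real.sqrt (1 - ε / 2)) * lam1 := by
      calc eucNorm zt ≤ (1 + δ) * m := hN_le
        _ ≤ (1 + δ) * (lam1 * Real.sqrt (1 - ε / 2)) :=
            mul_le_mul_of_nonneg_left hm (by linarith)
        _ = ((1 + δ) * Real.sqrt (1 - ε / 2)) * lam1 := by ring
    have hCl : 0 < ((1 + δ) * Real.sqrt (1 - ε / 2)) * lam1 := mul_pos hC hlam_pos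
    calc (v1 ⬝ᵥ z t) / ((1 + δ) * Real.sqrt (1 - ε / 2))
        = (lam1 * (v1 ⬝ᵥ z t)) / (((1 + δ) * Real.sqrt (1 - ε / 2)) * lam1) := by
          rw [mul_comm lam1, mul_div_mul_right _ _ (ne_of_gt hlam_pos)]
      _ ≤ (v1 ⬝ᵥ zt) / (((1 + δ) * Real.sqrt (1 - ε / 2)) * lam1) :=
          div_le_div_of_nonneg_right hnum hCl.le
      _ ≤ (eucNorm zt)⁻¹ * (v1 ⬝ᵥ zt) := by
          rw [div_eq_inv_mul]
          exact mul_le_mul_of_nonneg_right (inv_anti₀ hNpos hB) hnum0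
  -- positivity by induction
  have hpos : ∀ t, t ≤ T → 0 ≤ v1 ⬝ᵥ z t := by
    intro t
    induction t with
    | zero => intro _; exact le_trans (by positivity) hz0
    | succ t ih =>
      intro ht
      have ht' : t ≤ T := Nat.le_of_succ_le ht
      exact le_trans (div_nonneg (ih ht') hC.le) (key t ht' (ih ht'))
  intro t ht
  exact key t ht (hpos t ht)
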